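/- arXiv:0911.2185 — 3 statements merged into one kernel-verified Lean document; each statement's English description precedes it below -/
import Mathlib

section
/- Let α and β be antisymmetric real 7×7 matrices satisfying Σ_{b,c} φ₀_{abc} α_{bc} = 0 and Σ_{b,c} φ₀_{abc} β_{bc} = 0 for every index a. Then their matrix commutator [α, β] = αβ − βα also satisfies Σ_{b,c} φ₀_{abc} [α,β]_{bc} = 0 for every a. (Hence 𝔤₂ = {α ∈ 𝔰𝔬(7) : φ₀_{abc} α^{bc} = 0} is a Lie subalgebra of 𝔰𝔬(7).) -/
open scoped BigOperators

noncomputable section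

/-- Kronecker delta `δ` on `Fin 7`. -/
def kd (a b : Fin 7) : ℝ := if a = b then 1 else 0

/-- The elementary alternating 3-tensor supported on permutations of `(i, j, k)`. -/
def trip (i j k a b c : Fin 7) : ℝ :=
  (if a = i ∧ b = j ∧ c = k then (1 : ℝ) else 0)
    + (if a = j ∧ b = k ∧ c = i then (1 : ℝ) else 0)
    + (if a = k ∧ b = i ∧ c = j then (1 : ℝ) else 0)
    - (if a = i ∧ b = k ∧ c = j then (1 : ℝ) else 0)
    - (if a = k ∧ b = j ∧ c = i then (1 : ℝ) else 0)
    - (if a = j ∧ b = i ∧ c = k then (1 : ℝ) else 0)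

/-- The standard `G₂` 3-form `φ₀` on `ℝ⁷`.  Indices `0, …, 6` correspond to the
paper's `1, …, 7`, so this is
`e^{123} + e^{145} + e^{167} + e^{246} - e^{257} - e^{347} - e^{356}`. -/
def phi0 (a b c : Fin 7) : ℝ :=
  trip 0 1 2 a b c + trip 0 3 4 a b c + trip 0 5 6 a b c + trip 1 3 5 a b c
    - trip 1 4 6 a b c - trip 2 3 6 a b c - trip 2 4 5 a b c

/-- The totally antisymmetric Levi-Civita symbol `ε̂` on seven indices,
with `ε̂_{1234567} = 1`. -/
def eps7 (a b c d e f g : Fin 7) : ℝ :=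
  if h : Function.Bijective ![a, b, c, d, e, f, g] then
    ((Equiv.Perm.sign (Equiv.ofBijective _ h) : ℤ) : ℝ)
  else 0

/-- The 4-form `ψ₀ = ⋆φ₀`, the Euclidean Hodge dual of `φ₀`:
`ψ₀ = e^{4567} + e^{2367} + e^{2345} + e^{1357} - e^{1346} - e^{1256} - e^{1247}`. -/
def psi0 (m n p q : Fin 7) : ℝ :=
  (1 / 6 : ℝ) * ∑ r, ∑ s, ∑ t, eps7 m n p q r s t * phi0 r s t

lemma contract0 (M : Matrix (Fin 7) (Fin 7) ℝ) :
    ∑ b, ∑ c, phi0 0 b c * M b c = M 1 2 - M 2 1 + M 3 4 - M 4 3 + M 5 6 - M 6 5 := by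
  simp [Fin.sum_univ_seven, phi0, trip]
  ring

lemma contract1 (M : Matrix (Fin 7) (Fin 7) ℝ) :
    ∑ b, ∑ c, phi0 1 b c * M b c = - M 0 2 + M 2 0 + M 3 5 - M 4 6 - M 5 3 + M 6 4 := by
  simp [Fin.sum_univ_seven, phi0, trip]
  ring

lemma contract2 (M : Matrix (Fin 7) (Fin 7) ℝ) :
    ∑ b, ∑ c, phi0 2 b c * M b c = M 0 1 - M 1 0 - M 3 6 - M 4 5 + M 5 4 + M 6 3 := by
  simp [Fin.sum_univ_seven, phi0, trip]
  ring

lemma contract3 (M : Matrix (Fin 7) (Fin 7) ℝ) :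
    ∑ b, ∑ c, phi0 3 b c * M b c = - M 0 4 - M 1 5 + M 2 6 + M 4 0 + M 5 1 - M 6 2 := by
  simp [Fin.sum_univ_seven, phi0, trip]
  ring

lemma contract4 (M : Matrix (Fin 7) (Fin 7) ℝ) :
    ∑ b, ∑ c, phi0 4 b c * M b c = M 0 3 + M 1 6 + M 2 5 - M 3 0 - M 5 2 - M 6 1 := by
  simp [Fin.sum_univ_seven, phi0, trip]
  ring

lemma contract5 (M : Matrix (Fin 7) (Fin 7) ℝ) :
    ∑ b, ∑ c, phi0 5 b c * M b c = - M 0 6 + M 1 3 - M 2 4 - M 3 1 + M 4 2 + M 6 0 := by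
  simp [Fin.sum_univ_seven, phi0, trip]
  ring

lemma contract6 (M : Matrix (Fin 7) (Fin 7) ℝ) :
    ∑ b, ∑ c, phi0 6 b c * M b c = M 0 5 - M 1 4 - M 2 3 + M 3 2 + M 4 1 - M 5 0 := by
  simp [Fin.sum_univ_seven, phi0, trip]
  ring

/-- If `α, β ∈ 𝔰𝔬(7)` satisfy `φ₀_{abc} α^{bc} = 0` and
`φ₀_{abc} β^{bc} = 0` for every `a`, then so does their commutator `[α, β] = αβ - βα`;
hence `𝔤₂ = {α ∈ 𝔰𝔬(7) : φ₀_{abc} α^{bc} = 0}` is a Lie subalgebra of `𝔰𝔬(7)`. -/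
theorem g2_commutator_closed (α β : Matrix (Fin 7) (Fin 7) ℝ)
    (hα₁ : α.transpose = -α) (hβ₁ : β.transpose = -β)
    (hα₂ : ∀ a, ∑ b, ∑ c, phi0 a b c * α b c = 0)
    (hβ₂ : ∀ a, ∑ b, ∑ c, phi0 a b c * β b c = 0) :
    ∀ a, ∑ b, ∑ c, phi0 a b c * (α * β - β * α) b c = 0 := by
  have hA : ∀ i j, α i j = -α j i := fun i j => by
    have := congrFun (congrFun hα₁ j) i
    simpa [Matrix.transpose_apply] using this
  have hB : ∀ i j, β i j = -β j i := fun i j => by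
    have := congrFun (congrFun hβ₁ j) i
    simpa [Matrix.transpose_apply] using this
  have hA0 : ∀ i, α i i = 0 := fun i => by have := hA i i; linarith
  have hB0 : ∀ i, β i i = 0 := fun i => by have := hB i i; linarith
  have ha0 := hα₂ 0; rw [contract0] at ha0
  have hb0 := hβ₂ 0; rw [contract0] at hb0
  have ha1 := hα₂ 1; rw [contract1] at ha1
  have hb1 := hβ₂ 1; rw [contract1] at hb1
  have ha2 := hα₂ 2; rw [contract2] at ha2
  have hb2 := hβ₂ 2; rw [contract2] at hb2
  have ha3 := hα₂ 3; rw [contract3] at ha3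
  have hb3 := hβ₂ 3; rw [contract3] at hb3
  have ha4 := hα₂ 4; rw [contract4] at ha4
  have hb4 := hβ₂ 4; rw [contract4] at hb4
  have ha5 := hα₂ 5; rw [contract5] at ha5
  have hb5 := hβ₂ 5; rw [contract5] at hb5
  have ha6 := hα₂ 6; rw [contract6] at ha6
  have hb6 := hβ₂ 6; rw [contract6] at hb6
  simp only [hA 1 0, hA 2 0, hA 3 0, hA 4 0, hA 5 0, hA 6 0, hA 2 1, hA 3 1, hA 4 1, hA 5 1, hA 6 1, hA 3 2, hA 4 2, hA 5 2, hA 6 2, hA 4 3, hA 5 3, hA 6 3, hA 5 4, hA 6 4, hA 6 5, hB 1 0, hB 2 0, hB 3 0, hB 4 0, hB 5 0, hB 6 0, hB 2 1, hB 3 1, hB 4 1, hB 5 1, hB 6 1, hB 3 2, hB 4 2, hB 5 2, hB 6 2, hB 4 3, hB 5 3, hB 6 3, hB 5 4, hB 6 4, hB 6 5, hA0, hB0] at ha0 hb0 ha1 hb1 ha2 hb2 ha3 hb3 ha4 hb4 ha5 hb5 ha6 hb6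
  intro a
  fin_cases a
  · show ∑ b, ∑ c, phi0 0 b c * (α * β - β * α) b c = 0
    rw [contract0]
    simp only [Matrix.sub_apply, Matrix.mul_apply, Fin.sum_univ_seven]
    simp only [hA 1 0, hA 2 0, hA 3 0, hA 4 0, hA 5 0, hA 6 0, hA 2 1, hA 3 1, hA 4 1, hA 5 1, hA 6 1, hA 3 2, hA 4 2, hA 5 2, hA 6 2, hA 4 3, hA 5 3, hA 6 3, hA 5 4, hA 6 4, hA 6 5, hB 1 0, hB 2 0, hB 3 0, hB 4 0, hB 5 0, hB 6 0, hB 2 1, hB 3 1, hB 4 1, hB 5 1, hB 6 1, hB 3 2, hB 4 2, hB 5 2, hB 6 2, hB 4 3, hB 5 3, hB 6 3, hB 5 4, hB 6 4, hB 6 5, hA0, hB0]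
    linear_combination ((-1 : ℝ) * β 3 6 + (-1 : ℝ) * β 4 5) * ha1 + ((-1 : ℝ) * β 3 5 + (1 : ℝ) * β 4 6) * ha2 + ((1 : ℝ) * β 1 6 + (1 : ℝ) * β 2 5) * ha3 + ((1 : ℝ) * β 1 5 + (-1 : ℝ) * β 2 6) * ha4 + ((-1 : ℝ) * β 1 4 + (-1 : ℝ) * β 2 3) * ha5 + ((-1 : ℝ) * β 1 3 + (1 : ℝ) * β 2 4) * ha6 + ((1 : ℝ) * α 0 1) * hb1 + ((1 : ℝ) * α 0 2) * hb2 + ((1 : ℝ) * α 0 3) * hb3 + ((1 : ℝ) * α 0 4) * hb4 + ((1 : ℝ) * α 0 5) * hb5 + ((1 : ℝ) * α 0 6) * hb6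
  · show ∑ b, ∑ c, phi0 1 b c * (α * β - β * α) b c = 0
    rw [contract1]
    simp only [Matrix.sub_apply, Matrix.mul_apply, Fin.sum_univ_seven]
    simp only [hA 1 0, hA 2 0, hA 3 0, hA 4 0, hA 5 0, hA 6 0, hA 2 1, hA 3 1, hA 4 1, hA 5 1, hA 6 1, hA 3 2, hA 4 2, hA 5 2, hA 6 2, hA 4 3, hA 5 3, hA 6 3, hA 5 4, hA 6 4, hA 6 5, hB 1 0, hB 2 0, hB 3 0, hB 4 0, hB 5 0, hB 6 0, hB 2 1, hB 3 1, hB 4 1, hB 5 1, hB 6 1, hB 3 2, hB 4 2, hB 5 2, hB 6 2, hB 4 3, hB 5 3, hB 6 3, hB 5 4, hB 6 4, hB 6 5, hA0, hB0]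
    linear_combination ((1 : ℝ) * β 3 6 + (1 : ℝ) * β 4 5) * ha0 + ((1 : ℝ) * β 3 4 + (1 : ℝ) * β 5 6) * ha2 + ((-1 : ℝ) * β 0 6 + (-1 : ℝ) * β 2 4) * ha3 + ((-1 : ℝ) * β 0 5 + (1 : ℝ) * β 2 3) * ha4 + ((1 : ℝ) * β 0 4 + (-1 : ℝ) * β 2 6) * ha5 + ((1 : ℝ) * β 0 3 + (1 : ℝ) * β 2 5) * ha6 + ((-1 : ℝ) * α 0 1) * hb0 + ((1 : ℝ) * α 1 2) * hb2 + ((1 : ℝ) * α 1 3) * hb3 + ((1 : ℝ) * α 1 4) * hb4 + ((1 : ℝ) * α 1 5) * hb5 + ((1 : ℝ) * α 1 6) * hb6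
  · show ∑ b, ∑ c, phi0 2 b c * (α * β - β * α) b c = 0
    rw [contract2]
    simp only [Matrix.sub_apply, Matrix.mul_apply, Fin.sum_univ_seven]
    simp only [hA 1 0, hA 2 0, hA 3 0, hA 4 0, hA 5 0, hA 6 0, hA 2 1, hA 3 1, hA 4 1, hA 5 1, hA 6 1, hA 3 2, hA 4 2, hA 5 2, hA 6 2, hA 4 3, hA 5 3, hA 6 3, hA 5 4, hA 6 4, hA 6 5, hB 1 0, hB 2 0, hB 3 0, hB 4 0, hB 5 0, hB 6 0, hB 2 1, hB 3 1, hB 4 1, hB 5 1, hB 6 1, hB 3 2, hB 4 2, hB 5 2, hB 6 2, hB 4 3, hB 5 3, hB 6 3, hB 5 4, hB 6 4, hB 6 5, hA0, hB0]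
    linear_combination ((1 : ℝ) * β 3 5 + (-1 : ℝ) * β 4 6) * ha0 + ((-1 : ℝ) * β 3 4 + (-1 : ℝ) * β 5 6) * ha1 + ((-1 : ℝ) * β 2 3) * ha3 + ((-1 : ℝ) * β 2 4) * ha4 + ((-1 : ℝ) * β 2 5) * ha5 + ((-1 : ℝ) * β 2 6) * ha6 + ((-1 : ℝ) * α 0 2) * hb0 + ((-1 : ℝ) * α 1 2) * hb1 + ((1 : ℝ) * α 0 5 + (-1 : ℝ) * α 1 4) * hb3 + ((-1 : ℝ) * α 0 6 + (1 : ℝ) * α 1 3) * hb4 + ((-1 : ℝ) * α 0 3 + (-1 : ℝ) * α 1 6) * hb5 + ((1 : ℝ) * α 0 4 + (1 : ℝ) * α 1 5) * hb6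
  · show ∑ b, ∑ c, phi0 3 b c * (α * β - β * α) b c = 0
    rw [contract3]
    simp only [Matrix.sub_apply, Matrix.mul_apply, Fin.sum_univ_seven]
    simp only [hA 1 0, hA 2 0, hA 3 0, hA 4 0, hA 5 0, hA 6 0, hA 2 1, hA 3 1, hA 4 1, hA 5 1, hA 6 1, hA 3 2, hA 4 2, hA 5 2, hA 6 2, hA 4 3, hA 5 3, hA 6 3, hA 5 4, hA 6 4, hA 6 5, hB 1 0, hB 2 0, hB 3 0, hB 4 0, hB 5 0, hB 6 0, hB 2 1, hB 3 1, hB 4 1, hB 5 1, hB 6 1, hB 3 2, hB 4 2, hB 5 2, hB 6 2, hB 4 3, hB 5 3, hB 6 3, hB 5 4, hB 6 4, hB 6 5, hA0, hB0]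
    linear_combination ((-1 : ℝ) * β 1 6 + (-1 : ℝ) * β 2 5) * ha0 + ((1 : ℝ) * β 0 6 + (1 : ℝ) * β 2 4) * ha1 + ((1 : ℝ) * β 0 5 + (-1 : ℝ) * β 1 4) * ha2 + ((1 : ℝ) * β 1 2 + (1 : ℝ) * β 5 6) * ha4 + ((-1 : ℝ) * β 0 2 + (-1 : ℝ) * β 4 6) * ha5 + ((-1 : ℝ) * β 3 6) * ha6 + ((-1 : ℝ) * α 0 3) * hb0 + ((-1 : ℝ) * α 1 3) * hb1 + ((-1 : ℝ) * α 0 5 + (1 : ℝ) * α 1 4) * hb2 + ((1 : ℝ) * α 3 4) * hb4 + ((1 : ℝ) * α 3 5) * hb5 + ((1 : ℝ) * α 3 6) * hb6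
  · show ∑ b, ∑ c, phi0 4 b c * (α * β - β * α) b c = 0
    rw [contract4]
    simp only [Matrix.sub_apply, Matrix.mul_apply, Fin.sum_univ_seven]
    simp only [hA 1 0, hA 2 0, hA 3 0, hA 4 0, hA 5 0, hA 6 0, hA 2 1, hA 3 1, hA 4 1, hA 5 1, hA 6 1, hA 3 2, hA 4 2, hA 5 2, hA 6 2, hA 4 3, hA 5 3, hA 6 3, hA 5 4, hA 6 4, hA 6 5, hB 1 0, hB 2 0, hB 3 0, hB 4 0, hB 5 0, hB 6 0, hB 2 1, hB 3 1, hB 4 1, hB 5 1, hB 6 1, hB 3 2, hB 4 2, hB 5 2, hB 6 2, hB 4 3, hB 5 3, hB 6 3, hB 5 4, hB 6 4, hB 6 5, hA0, hB0]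
    linear_combination ((-1 : ℝ) * β 1 5 + (1 : ℝ) * β 2 6) * ha0 + ((1 : ℝ) * β 1 4) * ha1 + ((1 : ℝ) * β 2 4) * ha2 + ((-1 : ℝ) * β 1 2 + (-1 : ℝ) * β 5 6) * ha3 + ((-1 : ℝ) * β 4 5) * ha5 + ((1 : ℝ) * β 0 2 + (-1 : ℝ) * β 3 5) * ha6 + ((-1 : ℝ) * α 0 4) * hb0 + ((-1 : ℝ) * α 1 4) * hb1 + ((1 : ℝ) * α 0 6 + (-1 : ℝ) * α 1 3) * hb2 + ((-1 : ℝ) * α 3 4) * hb3 + ((1 : ℝ) * α 0 1 + (-1 : ℝ) * α 3 6) * hb5 + ((-1 : ℝ) * α 0 2 + (1 : ℝ) * α 3 5) * hb6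
  · show ∑ b, ∑ c, phi0 5 b c * (α * β - β * α) b c = 0
    rw [contract5]
    simp only [Matrix.sub_apply, Matrix.mul_apply, Fin.sum_univ_seven]
    simp only [hA 1 0, hA 2 0, hA 3 0, hA 4 0, hA 5 0, hA 6 0, hA 2 1, hA 3 1, hA 4 1, hA 5 1, hA 6 1, hA 3 2, hA 4 2, hA 5 2, hA 6 2, hA 4 3, hA 5 3, hA 6 3, hA 5 4, hA 6 4, hA 6 5, hB 1 0, hB 2 0, hB 3 0, hB 4 0, hB 5 0, hB 6 0, hB 2 1, hB 3 1, hB 4 1, hB 5 1, hB 6 1, hB 3 2, hB 4 2, hB 5 2, hB 6 2, hB 4 3, hB 5 3, hB 6 3, hB 5 4, hB 6 4, hB 6 5, hA0, hB0]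
    linear_combination ((1 : ℝ) * β 0 5) * ha0 + ((-1 : ℝ) * β 0 4 + (1 : ℝ) * β 2 6) * ha1 + ((1 : ℝ) * β 2 5) * ha2 + ((1 : ℝ) * β 0 2 + (1 : ℝ) * β 4 6) * ha3 + ((1 : ℝ) * β 4 5) * ha4 + ((1 : ℝ) * β 1 2 + (1 : ℝ) * β 3 4) * ha6 + ((-1 : ℝ) * α 0 5) * hb0 + ((-1 : ℝ) * α 1 5) * hb1 + ((1 : ℝ) * α 0 3 + (1 : ℝ) * α 1 6) * hb2 + ((-1 : ℝ) * α 3 5) * hb3 + ((-1 : ℝ) * α 0 1 + (1 : ℝ) * α 3 6) * hb4 + ((-1 : ℝ) * α 1 2 + (-1 : ℝ) * α 3 4) * hb6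
  · show ∑ b, ∑ c, phi0 6 b c * (α * β - β * α) b c = 0
    rw [contract6]
    simp only [Matrix.sub_apply, Matrix.mul_apply, Fin.sum_univ_seven]
    simp only [hA 1 0, hA 2 0, hA 3 0, hA 4 0, hA 5 0, hA 6 0, hA 2 1, hA 3 1, hA 4 1, hA 5 1, hA 6 1, hA 3 2, hA 4 2, hA 5 2, hA 6 2, hA 4 3, hA 5 3, hA 6 3, hA 5 4, hA 6 4, hA 6 5, hB 1 0, hB 2 0, hB 3 0, hB 4 0, hB 5 0, hB 6 0, hB 2 1, hB 3 1, hB 4 1, hB 5 1, hB 6 1, hB 3 2, hB 4 2, hB 5 2, hB 6 2, hB 4 3, hB 5 3, hB 6 3, hB 5 4, hB 6 4, hB 6 5, hA0, hB0]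
    linear_combination ((1 : ℝ) * β 0 6) * ha0 + ((1 : ℝ) * β 1 6) * ha1 + ((1 : ℝ) * β 0 4 + (1 : ℝ) * β 1 5) * ha2 + ((1 : ℝ) * β 3 6) * ha3 + ((-1 : ℝ) * β 0 2 + (1 : ℝ) * β 3 5) * ha4 + ((-1 : ℝ) * β 1 2 + (-1 : ℝ) * β 3 4) * ha5 + ((-1 : ℝ) * α 0 6) * hb0 + ((-1 : ℝ) * α 1 6) * hb1 + ((-1 : ℝ) * α 0 4 + (-1 : ℝ) * α 1 5) * hb2 + ((-1 : ℝ) * α 3 6) * hb3 + ((1 : ℝ) * α 0 2 + (-1 : ℝ) * α 3 5) * hb4 + ((1 : ℝ) * α 1 2 + (1 : ℝ) * α 3 4) * hb5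
end
end

section
/- The real vector space 𝔤₂ = {α : α an antisymmetric real 7×7 matrix with Σ_{b,c} φ₀_{abc} α_{bc} = 0 for every index a} has dimension 14. -/
open scoped BigOperators

noncomputable section

/-- The Lie algebra `𝔤₂` realized as the subspace of antisymmetric `7 × 7` real matrices
`α` satisfying `Σ_{b,c} φ₀_{abc} α_{bc} = 0` for every `a`. -/
def g2 : Submodule ℝ (Matrix (Fin 7) (Fin 7) ℝ) where
  carrier := {α | α.transpose = -α ∧ ∀ a, ∑ b, ∑ c, phi0 a b c * α b c = 0}
  zero_mem' := by
    refine ⟨by simp, fun a => by simp⟩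
  add_mem' := by
    intro α β hα hβ
    obtain ⟨hα₁, hα₂⟩ := hα
    obtain ⟨hβ₁, hβ₂⟩ := hβ
    refine ⟨by rw [Matrix.transpose_add, hα₁, hβ₁, neg_add], fun a => ?_⟩
    have h : ∀ b c : Fin 7, phi0 a b c * (α + β) b c
        = phi0 a b c * α b c + phi0 a b c * β b c := by
      intro b c; simp [Matrix.add_apply, mul_add]
    simp only [h, Finset.sum_add_distrib, hα₂ a, hβ₂ a, add_zero]
  smul_mem' := by
    intro r α hα
    obtain ⟨hα₁, hα₂⟩ := hα
    refine ⟨by rw [Matrix.transpose_smul, hα₁, smul_neg], fun a => ?_⟩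
    have h : ∀ b c : Fin 7, phi0 a b c * (r • α) b c = r * (phi0 a b c * α b c) := by
      intro b c; simp [Matrix.smul_apply]; ring
    simp only [h, ← Finset.mul_sum, hα₂ a, mul_zero]


/-- Candidate matrix in `g2` with prescribed 14 free entries. -/
def mk (v : Fin 14 → ℝ) : Matrix (Fin 7) (Fin 7) ℝ :=
  !![0, v 0, v 1, v 2, v 3, v 4, v 5;
     -v 0, 0, v 6, v 7, v 8, v 9, v 10;
     -v 1, -v 6, 0, v 4 - v 8, v 7 - v 5, -v 2 - v 10, v 3 + v 9;
     -v 2, -v 7, -(v 4 - v 8), 0, v 11, v 12, v 13;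
     -v 3, -v 8, -(v 7 - v 5), -v 11, 0, v 0 - v 13, v 12 - v 1;
     -v 4, -v 9, -(-v 2 - v 10), -v 12, -(v 0 - v 13), 0, -v 6 - v 11;
     -v 5, -v 10, -(v 3 + v 9), -v 13, -(v 12 - v 1), -(-v 6 - v 11), 0]

@[simp] lemma mk_00 (v : Fin 14 → ℝ) : mk v 0 0 = 0 := rfl
@[simp] lemma mk_01 (v : Fin 14 → ℝ) : mk v 0 1 = v 0 := rfl
@[simp] lemma mk_02 (v : Fin 14 → ℝ) : mk v 0 2 = v 1 := rfl
@[simp] lemma mk_03 (v : Fin 14 → ℝ) : mk v 0 3 = v 2 := rfl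
@[simp] lemma mk_04 (v : Fin 14 → ℝ) : mk v 0 4 = v 3 := rfl
@[simp] lemma mk_05 (v : Fin 14 → ℝ) : mk v 0 5 = v 4 := rfl
@[simp] lemma mk_06 (v : Fin 14 → ℝ) : mk v 0 6 = v 5 := rfl
@[simp] lemma mk_10 (v : Fin 14 → ℝ) : mk v 1 0 = -v 0 := rfl
@[simp] lemma mk_11 (v : Fin 14 → ℝ) : mk v 1 1 = 0 := rfl
@[simp] lemma mk_12 (v : Fin 14 → ℝ) : mk v 1 2 = v 6 := rfl
@[simp] lemma mk_13 (v : Fin 14 → ℝ) : mk v 1 3 = v 7 := rfl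
@[simp] lemma mk_14 (v : Fin 14 → ℝ) : mk v 1 4 = v 8 := rfl
@[simp] lemma mk_15 (v : Fin 14 → ℝ) : mk v 1 5 = v 9 := rfl
@[simp] lemma mk_16 (v : Fin 14 → ℝ) : mk v 1 6 = v 10 := rfl
@[simp] lemma mk_20 (v : Fin 14 → ℝ) : mk v 2 0 = -v 1 := rfl
@[simp] lemma mk_21 (v : Fin 14 → ℝ) : mk v 2 1 = -v 6 := rfl
@[simp] lemma mk_22 (v : Fin 14 → ℝ) : mk v 2 2 = 0 := rfl
@[simp] lemma mk_23 (v : Fin 14 → ℝ) : mk v 2 3 = v 4 - v 8 := rfl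
@[simp] lemma mk_24 (v : Fin 14 → ℝ) : mk v 2 4 = v 7 - v 5 := rfl
@[simp] lemma mk_25 (v : Fin 14 → ℝ) : mk v 2 5 = -v 2 - v 10 := rfl
@[simp] lemma mk_26 (v : Fin 14 → ℝ) : mk v 2 6 = v 3 + v 9 := rfl
@[simp] lemma mk_30 (v : Fin 14 → ℝ) : mk v 3 0 = -v 2 := rfl
@[simp] lemma mk_31 (v : Fin 14 → ℝ) : mk v 3 1 = -v 7 := rfl
@[simp] lemma mk_32 (v : Fin 14 → ℝ) : mk v 3 2 = -(v 4 - v 8) := rfl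
@[simp] lemma mk_33 (v : Fin 14 → ℝ) : mk v 3 3 = 0 := rfl
@[simp] lemma mk_34 (v : Fin 14 → ℝ) : mk v 3 4 = v 11 := rfl
@[simp] lemma mk_35 (v : Fin 14 → ℝ) : mk v 3 5 = v 12 := rfl
@[simp] lemma mk_36 (v : Fin 14 → ℝ) : mk v 3 6 = v 13 := rfl
@[simp] lemma mk_40 (v : Fin 14 → ℝ) : mk v 4 0 = -v 3 := rfl
@[simp] lemma mk_41 (v : Fin 14 → ℝ) : mk v 4 1 = -v 8 := rfl
@[simp] lemma mk_42 (v : Fin 14 → ℝ) : mk v 4 2 = -(v 7 - v 5) := rfl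
@[simp] lemma mk_43 (v : Fin 14 → ℝ) : mk v 4 3 = -v 11 := rfl
@[simp] lemma mk_44 (v : Fin 14 → ℝ) : mk v 4 4 = 0 := rfl
@[simp] lemma mk_45 (v : Fin 14 → ℝ) : mk v 4 5 = v 0 - v 13 := rfl
@[simp] lemma mk_46 (v : Fin 14 → ℝ) : mk v 4 6 = v 12 - v 1 := rfl
@[simp] lemma mk_50 (v : Fin 14 → ℝ) : mk v 5 0 = -v 4 := rfl
@[simp] lemma mk_51 (v : Fin 14 → ℝ) : mk v 5 1 = -v 9 := rfl
@[simp] lemma mk_52 (v : Fin 14 → ℝ) : mk v 5 2 = -(-v 2 - v 10) := rfl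
@[simp] lemma mk_53 (v : Fin 14 → ℝ) : mk v 5 3 = -v 12 := rfl
@[simp] lemma mk_54 (v : Fin 14 → ℝ) : mk v 5 4 = -(v 0 - v 13) := rfl
@[simp] lemma mk_55 (v : Fin 14 → ℝ) : mk v 5 5 = 0 := rfl
@[simp] lemma mk_56 (v : Fin 14 → ℝ) : mk v 5 6 = -v 6 - v 11 := rfl
@[simp] lemma mk_60 (v : Fin 14 → ℝ) : mk v 6 0 = -v 5 := rfl
@[simp] lemma mk_61 (v : Fin 14 → ℝ) : mk v 6 1 = -v 10 := rfl
@[simp] lemma mk_62 (v : Fin 14 → ℝ) : mk v 6 2 = -(v 3 + v 9) := rfl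
@[simp] lemma mk_63 (v : Fin 14 → ℝ) : mk v 6 3 = -v 13 := rfl
@[simp] lemma mk_64 (v : Fin 14 → ℝ) : mk v 6 4 = -(v 12 - v 1) := rfl
@[simp] lemma mk_65 (v : Fin 14 → ℝ) : mk v 6 5 = -(-v 6 - v 11) := rfl
@[simp] lemma mk_66 (v : Fin 14 → ℝ) : mk v 6 6 = 0 := rfl

/-- The coordinate projection onto the 14 free entries. -/
def proj : g2 →ₗ[ℝ] (Fin 14 → ℝ) where
  toFun α := ![α.1 0 1, α.1 0 2, α.1 0 3, α.1 0 4, α.1 0 5, α.1 0 6,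
    α.1 1 2, α.1 1 3, α.1 1 4, α.1 1 5, α.1 1 6, α.1 3 4, α.1 3 5, α.1 3 6]
  map_add' α β := by funext i; fin_cases i <;> rfl
  map_smul' r α := by funext i; fin_cases i <;> rfl

@[simp] lemma proj_0 (α : g2) : proj α 0 = α.1 0 1 := rfl
@[simp] lemma proj_1 (α : g2) : proj α 1 = α.1 0 2 := rfl
@[simp] lemma proj_2 (α : g2) : proj α 2 = α.1 0 3 := rfl
@[simp] lemma proj_3 (α : g2) : proj α 3 = α.1 0 4 := rfl
@[simp] lemma proj_4 (α : g2) : proj α 4 = α.1 0 5 := rfl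
@[simp] lemma proj_5 (α : g2) : proj α 5 = α.1 0 6 := rfl
@[simp] lemma proj_6 (α : g2) : proj α 6 = α.1 1 2 := rfl
@[simp] lemma proj_7 (α : g2) : proj α 7 = α.1 1 3 := rfl
@[simp] lemma proj_8 (α : g2) : proj α 8 = α.1 1 4 := rfl
@[simp] lemma proj_9 (α : g2) : proj α 9 = α.1 1 5 := rfl
@[simp] lemma proj_10 (α : g2) : proj α 10 = α.1 1 6 := rfl
@[simp] lemma proj_11 (α : g2) : proj α 11 = α.1 3 4 := rfl
@[simp] lemma proj_12 (α : g2) : proj α 12 = α.1 3 5 := rfl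
@[simp] lemma proj_13 (α : g2) : proj α 13 = α.1 3 6 := rfl

lemma sum_expand (α : Matrix (Fin 7) (Fin 7) ℝ) (a : Fin 7) :
    ∑ b, ∑ c, phi0 a b c * α b c =
      if a = 0 then α 1 2 + α 3 4 + α 5 6 - α 2 1 - α 4 3 - α 6 5 else
      if a = 1 then α 2 0 + α 3 5 - α 4 6 - α 0 2 - α 5 3 + α 6 4 else
      if a = 2 then α 0 1 - α 3 6 - α 4 5 - α 1 0 + α 6 3 + α 5 4 else
      if a = 3 then α 4 0 + α 5 1 - α 6 2 - α 0 4 - α 1 5 + α 2 6 else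
      if a = 4 then α 0 3 - α 6 1 - α 5 2 - α 3 0 + α 1 6 + α 2 5 else
      if a = 5 then α 6 0 + α 1 3 - α 2 4 - α 0 6 - α 3 1 + α 4 2 else
      α 0 5 - α 1 4 - α 2 3 + α 3 2 + α 4 1 - α 5 0 := by
  fin_cases a <;>
    · simp [Fin.sum_univ_seven, phi0, trip]
      try ring

lemma mk_mem (v : Fin 14 → ℝ) : mk v ∈ g2 := by
  constructor
  · ext i j
    fin_cases i <;> fin_cases j <;> simp [Matrix.transpose_apply, Matrix.neg_apply] <;> ring
  · intro a
    rw [sum_expand]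
    split_ifs <;> · simp; try ring

lemma proj_mk (v : Fin 14 → ℝ) : proj ⟨mk v, mk_mem v⟩ = v := by
  funext i
  fin_cases i <;> simp

set_option maxHeartbeats 4000000 in
lemma mk_proj (α : g2) : mk (proj α) = α.1 := by
  obtain ⟨α, h1, h2⟩ := α
  have hd : ∀ i : Fin 7, α i i = 0 := by
    intro i
    have := congrFun (congrFun h1 i) i
    simp only [Matrix.transpose_apply, Matrix.neg_apply] at this
    linarith
  have hs : ∀ i j : Fin 7, α j i = -α i j := by
    intro i j
    have := congrFun (congrFun h1 i) j
    simpa only [Matrix.transpose_apply, Matrix.neg_apply] using this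
  have e0 := h2 0; have e1 := h2 1; have e2 := h2 2; have e3 := h2 3
  have e4 := h2 4; have e5 := h2 5; have e6 := h2 6
  rw [sum_expand] at e0 e1 e2 e3 e4 e5 e6
  simp only [Fin.reduceEq, reduceIte] at e0 e1 e2 e3 e4 e5 e6
  ext i j
  fin_cases i <;> fin_cases j <;>
    · simp
      try linarith [e0, e1, e2, e3, e4, e5, e6, hd 0, hd 1, hd 2, hd 3, hd 4, hd 5, hd 6,
        hs 0 1, hs 0 2, hs 0 3, hs 0 4, hs 0 5, hs 0 6, hs 1 2, hs 1 3, hs 1 4,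
        hs 1 5, hs 1 6, hs 2 3, hs 2 4, hs 2 5, hs 2 6, hs 3 4, hs 3 5, hs 3 6,
        hs 4 5, hs 4 6, hs 5 6]

/-- The real vector space `𝔤₂` has dimension `14`. -/
theorem g2_dim_fourteen : Module.finrank ℝ g2 = 14 := by
  have hb : Function.Bijective proj :=
    ⟨fun α β h => Subtype.ext (by rw [← mk_proj α, ← mk_proj β, h]),
     fun v => ⟨⟨mk v, mk_mem v⟩, proj_mk v⟩⟩
  rw [LinearEquiv.finrank_eq (LinearEquiv.ofBijective proj hb)]
  simp
end
end

section
/- Every antisymmetric real 7×7 matrix α decomposes uniquely as α = ρ_φ(ω) + β, where ω ∈ ℝ⁷, ρ_φ(ω) is the antisymmetric matrix with entries ρ_φ(ω)_{bc} = Σ_a ω_a φ₀_{abc}, and β is an antisymmetric matrix satisfying Σ_{b,c} φ₀_{abc} β_{bc} = 0 for every a. (This is the G₂-invariant decomposition 𝔰𝔬(7) = 𝔤₂ ⊕ ρ_φ(ℝ⁷), i.e. Λ² = Λ²₇ ⊕ Λ²₁₄.) -/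
open scoped BigOperators

noncomputable section

/-! ### Auxiliary integer-valued versions of the tensors -/

def tripZ (i j k a b c : Fin 7) : ℤ :=
  (if a = i ∧ b = j ∧ c = k then (1 : ℤ) else 0)
    + (if a = j ∧ b = k ∧ c = i then (1 : ℤ) else 0)
    + (if a = k ∧ b = i ∧ c = j then (1 : ℤ) else 0)
    - (if a = i ∧ b = k ∧ c = j then (1 : ℤ) else 0)
    - (if a = k ∧ b = j ∧ c = i then (1 : ℤ) else 0)
    - (if a = j ∧ b = i ∧ c = k then (1 : ℤ) else 0)

def phiZ (a b c : Fin 7) : ℤ :=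
  tripZ 0 1 2 a b c + tripZ 0 3 4 a b c + tripZ 0 5 6 a b c + tripZ 1 3 5 a b c
    - tripZ 1 4 6 a b c - tripZ 2 3 6 a b c - tripZ 2 4 5 a b c

lemma phi0_cast (a b c : Fin 7) : phi0 a b c = ((phiZ a b c : ℤ) : ℝ) := by
  simp only [phi0, phiZ, trip, tripZ]
  push_cast [apply_ite (fun z : ℤ => (z : ℝ))]
  ring

lemma phiZ_swap : ∀ a b c : Fin 7, phiZ a c b = - phiZ a b c := by decide

lemma phi0_swap (a b c : Fin 7) : phi0 a c b = - phi0 a b c := by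
  rw [phi0_cast, phi0_cast, phiZ_swap]; push_cast; ring

lemma phiZ_contract : ∀ a d : Fin 7,
    (∑ b, ∑ c, phiZ a b c * phiZ d b c) = if a = d then 6 else 0 := by decide

lemma phi0_contract (a d : Fin 7) :
    ∑ b, ∑ c, phi0 a b c * phi0 d b c = if a = d then (6 : ℝ) else 0 := by
  have h : ∀ b c : Fin 7, phi0 a b c * phi0 d b c = ((phiZ a b c * phiZ d b c : ℤ) : ℝ) := by
    intro b c; rw [phi0_cast, phi0_cast]; push_cast; ring
  simp only [h, ← Int.cast_sum, phiZ_contract a d]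
  split <;> norm_num

lemma contract_rho (γ : Fin 7 → ℝ) (a : Fin 7) :
    ∑ b, ∑ c, phi0 a b c * (∑ d, γ d * phi0 d b c) = 6 * γ a := by
  have h1 : ∀ b c : Fin 7, phi0 a b c * (∑ d, γ d * phi0 d b c)
      = ∑ d, γ d * (phi0 a b c * phi0 d b c) := by
    intro b c
    rw [Finset.mul_sum]
    exact Finset.sum_congr rfl fun d _ => by ring
  simp only [h1]
  have h2 : (∑ b, ∑ c, ∑ d, γ d * (phi0 a b c * phi0 d b c))
      = ∑ d, ∑ b, ∑ c, γ d * (phi0 a b c * phi0 d b c) := by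
    calc (∑ b, ∑ c, ∑ d, γ d * (phi0 a b c * phi0 d b c))
        = ∑ b, ∑ d, ∑ c, γ d * (phi0 a b c * phi0 d b c) :=
          Finset.sum_congr rfl fun b _ => Finset.sum_comm
      _ = ∑ d, ∑ b, ∑ c, γ d * (phi0 a b c * phi0 d b c) := Finset.sum_comm
  rw [h2]
  have h3 : ∀ d : Fin 7, (∑ b, ∑ c, γ d * (phi0 a b c * phi0 d b c))
      = γ d * (if a = d then (6 : ℝ) else 0) := by
    intro d
    rw [← phi0_contract a d, Finset.mul_sum]
    exact Finset.sum_congr rfl fun b _ => by rw [Finset.mul_sum]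
  simp only [h3, mul_ite, mul_zero, Finset.sum_ite_eq, Finset.mem_univ, if_true]
  ring

/-- Every antisymmetric real `7 × 7` matrix `α` decomposes uniquely as
`α = ρ_φ(ω) + β` with `ω ∈ ℝ⁷`, `ρ_φ(ω)_{bc} = Σ_a ω_a φ₀_{abc}`, and `β` antisymmetric
with `Σ_{b,c} φ₀_{abc} β_{bc} = 0` for every `a`; i.e. `𝔰𝔬(7) = 𝔤₂ ⊕ ρ_φ(ℝ⁷)`. -/
theorem so7_decomposition (α : Matrix (Fin 7) (Fin 7) ℝ) (hα : α.transpose = -α) :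
    ∃! p : (Fin 7 → ℝ) × Matrix (Fin 7) (Fin 7) ℝ,
      p.2.transpose = -p.2 ∧
      (∀ a, ∑ b, ∑ c, phi0 a b c * p.2 b c = 0) ∧
      ∀ b c, α b c = (∑ a, p.1 a * phi0 a b c) + p.2 b c := by
  classical
  have hanti : ∀ i j, α i j = - α j i := by
    intro i j
    have := congrFun (congrFun hα j) i
    simpa [Matrix.transpose_apply, Matrix.neg_apply] using this
  set ω : Fin 7 → ℝ := fun a => (1 / 6 : ℝ) * ∑ b, ∑ c, phi0 a b c * α b c with hωdef
  set β : Matrix (Fin 7) (Fin 7) ℝ :=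
    Matrix.of fun b c => α b c - ∑ a, ω a * phi0 a b c with hβdef
  have hωa : ∀ a, ω a = (1 / 6 : ℝ) * ∑ b, ∑ c, phi0 a b c * α b c := fun a => by rw [hωdef]
  have hβa : ∀ b c, β b c = α b c - ∑ a, ω a * phi0 a b c := fun b c => by rw [hβdef]; rfl
  refine ⟨⟨ω, β⟩, ⟨?_, ?_, ?_⟩, ?_⟩
  · -- β antisymmetric
    dsimp only
    ext b c
    simp only [Matrix.transpose_apply, Matrix.neg_apply]
    rw [hβa c b, hβa b c, hanti c b]
    have hs : (∑ a, ω a * phi0 a c b) = - ∑ a, ω a * phi0 a b c := by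
      have h : ∀ a : Fin 7, ω a * phi0 a c b = - (ω a * phi0 a b c) := fun a => by
        rw [phi0_swap]; ring
      simp only [h, Finset.sum_neg_distrib]
    rw [hs]; ring
  · -- contraction with φ vanishes
    dsimp only
    intro a
    have e1 : ∀ b c : Fin 7, phi0 a b c * β b c
        = phi0 a b c * α b c - phi0 a b c * ∑ d, ω d * phi0 d b c := fun b c => by
      rw [hβa]; ring
    simp only [e1, Finset.sum_sub_distrib]
    rw [contract_rho, hωa a]; ring
  · -- decomposition
    dsimp only
    intro b c
    rw [hβa]; ring
  · -- uniqueness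
    rintro ⟨ω', β'⟩ ⟨hb1, hb2, hb3⟩
    dsimp only at hb1 hb2 hb3
    have key : ∀ a, ω' a = ω a := by
      intro a
      have e : ∑ b, ∑ c, phi0 a b c * α b c = 6 * ω' a := by
        have e1 : ∀ b c : Fin 7, phi0 a b c * α b c
            = phi0 a b c * (∑ d, ω' d * phi0 d b c) + phi0 a b c * β' b c := fun b c => by
          rw [hb3 b c]; ring
        simp only [e1, Finset.sum_add_distrib]
        rw [contract_rho, hb2 a]; ring
      rw [hωa a, e]; ring
    have hβ' : β' = β := by
      funext b c
      rw [hβa b c, hb3 b c]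
      have e2 : (∑ d, ω' d * phi0 d b c) = ∑ d, ω d * phi0 d b c :=
        Finset.sum_congr rfl fun d _ => by rw [key d]
      rw [e2]; ring
    exact Prod.ext (funext key) hβ'
end
end
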